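/- Given any continuous function u on [0,1], there exists a function w on [0,1] which is continuous on [0,1], twice continuously differentiable on (0,1], concave, strictly increasing, satisfies w(x) ≥ u(x) for all x ∈ [0,1], and w(0) = u(0). -/

import Mathlib

open Set

open Filter

open Set

noncomputable def phi (s : ℝ) : ℝ := 1 - max (1 - s) 0 ^ 3

lemma phi_zero : phi 0 = 0 := by simp [phi]

lemma phi_of_one_le {s : ℝ} (h : 1 ≤ s) : phi s = 1 := by
  have : max (1 - s) 0 = 0 := max_eq_right (by linarith)
  simp [phi, this]

lemma phi_nonneg {s : ℝ} (h : 0 ≤ s) : 0 ≤ phi s := by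
  have h1 : max (1 - s) 0 ≤ 1 := max_le (by linarith) one_pos.le
  have h2 : (0:ℝ) ≤ max (1 - s) 0 := le_max_right _ _
  have := pow_le_one₀ h2 h1 (n := 3)
  simp only [phi]; linarith [this]

lemma phi_le_one (s : ℝ) : phi s ≤ 1 := by
  have h2 : (0:ℝ) ≤ max (1 - s) 0 := le_max_right _ _
  have := pow_nonneg h2 3
  simp only [phi]; linarith

lemma phi_mono : Monotone phi := by
  intro s t hst
  have h1 : max (1 - t) 0 ≤ max (1 - s) 0 := max_le_max (by linarith) le_rfl
  have h2 : (0:ℝ) ≤ max (1 - t) 0 := le_max_right _ _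
  have := pow_le_pow_left₀ h2 h1 3
  simp only [phi]; linarith

lemma q_convex : ConvexOn ℝ univ (fun t : ℝ => max t 0 ^ 3) := by
  have hmax : ConvexOn ℝ univ (fun t : ℝ => max t 0) :=
    (convexOn_id convex_univ).sup (convexOn_const 0 convex_univ)
  refine ⟨convex_univ, ?_⟩
  intro x _ y _ a b ha hb hab
  have h1 : max (a • x + b • y) 0 ≤ a • max x 0 + b • max y 0 :=
    hmax.2 (mem_univ x) (mem_univ y) ha hb hab
  have h0 : (0:ℝ) ≤ max (a • x + b • y) 0 := le_max_right _ _
  have h2 : max (a • x + b • y) 0 ^ 3 ≤ (a • max x 0 + b • max y 0) ^ 3 :=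
    pow_le_pow_left₀ h0 h1 3
  have h3 : (a • max x 0 + b • max y 0) ^ 3 ≤ a • (max x 0 ^ 3) + b • (max y 0 ^ 3) :=
    (convexOn_pow 3).2 (mem_Ici.2 (le_max_right x 0)) (mem_Ici.2 (le_max_right y 0)) ha hb hab
  exact h2.trans h3

lemma phi_concave_ineq {x y a b : ℝ} (ha : 0 ≤ a) (hb : 0 ≤ b) (hab : a + b = 1) :
    a * phi x + b * phi y ≤ phi (a * x + b * y) := by
  have := q_convex.2 (mem_univ (1 - x)) (mem_univ (1 - y)) ha hb hab
  simp only [smul_eq_mul] at this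
  simp only [phi]
  have harg : 1 - (a * x + b * y) = a * (1 - x) + b * (1 - y) := by linear_combination -hab
  rw [harg]
  nlinarith [this]
open Set Filter

lemma hasDerivAt_maxcube (t : ℝ) :
    HasDerivAt (fun t : ℝ => max t 0 ^ 3) (3 * max t 0 ^ 2) t := by
  rcases lt_trichotomy t 0 with ht | rfl | ht
  · have hmax : max t 0 = 0 := max_eq_right ht.le
    have : HasDerivAt (fun _ : ℝ => (0:ℝ)) 0 t := hasDerivAt_const t 0
    rw [hmax]; norm_num
    refine this.congr_of_eventuallyEq ?_
    filter_upwards [eventually_lt_nhds ht] with s hs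
    rw [max_eq_right hs.le]; norm_num
  · rw [hasDerivAt_iff_isLittleO]
    simp only [max_self, ne_eq]
    rw [Asymptotics.isLittleO_iff]
    intro ε hε
    have : ∀ᶠ h : ℝ in nhds 0, |h| ≤ Real.sqrt ε := by
      have := Metric.closedBall_mem_nhds (0:ℝ) (Real.sqrt_pos.2 hε)
      filter_upwards [this] with h hh
      simpa [Real.dist_eq] using hh
    filter_upwards [this] with h hh
    have h1 : max (0 + h) 0 ≤ |h| := by
      rw [zero_add]; exact max_le (le_abs_self h) (abs_nonneg h)
    have h0 : (0:ℝ) ≤ max (0 + h) 0 := le_max_right _ _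
    have : max (0 + h) 0 ^ 3 ≤ |h| ^ 3 := pow_le_pow_left₀ h0 h1 3
    have hsq : |h| ^ 2 ≤ ε := by
      calc |h| ^ 2 ≤ Real.sqrt ε ^ 2 := by
            apply pow_le_pow_left₀ (abs_nonneg h) hh
        _ = ε := Real.sq_sqrt hε.le
    rw [zero_add] at this h0
    have h1' := h1
    simp only [max_self, zero_pow, smul_eq_mul, mul_zero, sub_zero, ne_eq]
    norm_num
    rw [abs_of_nonneg h0]
    nlinarith [this, hsq, abs_nonneg h]
  · have hmax : max t 0 = t := max_eq_left ht.le
    have : HasDerivAt (fun s : ℝ => s ^ 3) (3 * t ^ 2) t := by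
      simpa using hasDerivAt_pow 3 t
    rw [hmax]
    refine this.congr_of_eventuallyEq ?_
    filter_upwards [eventually_gt_nhds ht] with s hs
    rw [max_eq_left hs.le]

lemma hasDerivAt_maxsq (t : ℝ) :
    HasDerivAt (fun t : ℝ => 3 * max t 0 ^ 2) (6 * max t 0) t := by
  rcases lt_trichotomy t 0 with ht | rfl | ht
  · have hmax : max t 0 = 0 := max_eq_right ht.le
    have h0 : HasDerivAt (fun _ : ℝ => (0:ℝ)) 0 t := hasDerivAt_const t 0
    rw [hmax]; norm_num
    refine h0.congr_of_eventuallyEq ?_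
    filter_upwards [eventually_lt_nhds ht] with s hs
    rw [max_eq_right hs.le]; norm_num
  · rw [hasDerivAt_iff_isLittleO]
    rw [Asymptotics.isLittleO_iff]
    intro ε hε
    have : ∀ᶠ h : ℝ in nhds 0, |h| ≤ ε / 3 := by
      have := Metric.closedBall_mem_nhds (0:ℝ) (by positivity : (0:ℝ) < ε / 3)
      filter_upwards [this] with h hh
      simpa [Real.dist_eq] using hh
    filter_upwards [this] with h hh
    have h1 : max (0 + h) 0 ≤ |h| := by
      rw [zero_add]; exact max_le (le_abs_self h) (abs_nonneg h)
    have h0 : (0:ℝ) ≤ max (0 + h) 0 := le_max_right _ _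
    have hsq : max (0 + h) 0 ^ 2 ≤ |h| ^ 2 := pow_le_pow_left₀ h0 h1 2
    rw [zero_add] at hsq h0
    simp only [max_self, zero_pow, smul_eq_mul, mul_zero, sub_zero, ne_eq]
    norm_num
    nlinarith [hsq, abs_nonneg h, hh, hε.le]
  · have hmax : max t 0 = t := max_eq_left ht.le
    have : HasDerivAt (fun s : ℝ => 3 * s ^ 2) (6 * t) t := by
      have := (hasDerivAt_pow 2 t).const_mul (3:ℝ)
      norm_num at this
      rw [show (6:ℝ) * t = 3 * (2 * t) by ring]; exact this
    rw [hmax]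
    refine this.congr_of_eventuallyEq ?_
    filter_upwards [eventually_gt_nhds ht] with s hs
    rw [max_eq_left hs.le]

lemma contDiff_maxcube : ContDiff ℝ 2 (fun t : ℝ => max t 0 ^ 3) := by
  have h1 : (deriv fun t : ℝ => max t 0 ^ 3) = fun t => 3 * max t 0 ^ 2 :=
    funext fun t => (hasDerivAt_maxcube t).deriv
  have h2 : (deriv fun t : ℝ => 3 * max t 0 ^ 2) = fun t => 6 * max t 0 :=
    funext fun t => (hasDerivAt_maxsq t).deriv
  have : (2 : WithTop ℕ∞) = 1 + 1 := by norm_num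
  rw [this, contDiff_succ_iff_deriv]
  refine ⟨fun t => (hasDerivAt_maxcube t).differentiableAt, by simp, ?_⟩
  rw [h1, contDiff_one_iff_deriv]
  refine ⟨fun t => (hasDerivAt_maxsq t).differentiableAt, ?_⟩
  rw [h2]
  exact continuous_const.mul ((continuous_id.max continuous_const))
lemma phi_contDiff : ContDiff ℝ 2 phi := by
  unfold phi
  exact contDiff_const.sub (contDiff_maxcube.comp (contDiff_const.sub contDiff_id))

/-- Concave majorant lemma: every continuous `u` on `[0,1]` admits a majorant `w` which is
continuous on `[0,1]`, `C²` on `(0,1]`, concave, strictly increasing, with `w(0) = u(0)`. -/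
theorem concave_majorant (u : ℝ → ℝ) (hu : ContinuousOn u (Icc 0 1)) :
    ∃ w : ℝ → ℝ,
      ContinuousOn w (Icc 0 1) ∧
      ContDiffOn ℝ 2 w (Ioc 0 1) ∧
      ConcaveOn ℝ (Icc 0 1) w ∧
      StrictMonoOn w (Icc 0 1) ∧
      (∀ x ∈ Icc (0 : ℝ) 1, u x ≤ w x) ∧
      w 0 = u 0 := by
  classical
  obtain ⟨C, hC⟩ := isCompact_Icc.exists_bound_of_continuousOn hu
  set M : ℝ := C + |u 0| + 1 with hMdef
  have hC0 : 0 ≤ C := le_trans (norm_nonneg _) (hC 0 ⟨le_refl 0, zero_le_one⟩)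
  have hM1 : 1 ≤ M := by have := abs_nonneg (u 0); simp only [hMdef]; linarith
  have hM0 : 0 < M := lt_of_lt_of_le one_pos hM1
  have hMu : ∀ x ∈ Icc (0:ℝ) 1, u x - u 0 ≤ M := by
    intro x hx
    have h1 := hC x hx
    rw [Real.norm_eq_abs] at h1
    have h2 := (abs_le.1 h1).2
    have h3 := neg_abs_le (u 0)
    simp only [hMdef]; linarith
  -- choice of the moduli δ n
  have hδ : ∀ n : ℕ, ∃ d : ℝ, 0 < d ∧
      ∀ x ∈ Icc (0:ℝ) 1, x ≤ d → u x - u 0 ≤ M * (2⁻¹:ℝ)^n := by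
    intro n
    have h0 : (0:ℝ) ∈ Icc (0:ℝ) 1 := ⟨le_refl 0, zero_le_one⟩
    have hcw : ContinuousWithinAt u (Icc 0 1) 0 := hu 0 h0
    have hε : 0 < M * (2⁻¹:ℝ)^n := by positivity
    rw [Metric.continuousWithinAt_iff] at hcw
    obtain ⟨d, hd, hball⟩ := hcw _ hε
    refine ⟨d/2, by positivity, fun x hx hxd => ?_⟩
    have hdist : dist x 0 < d := by
      rw [Real.dist_eq, sub_zero, abs_of_nonneg hx.1]; linarith
    have h1 := hball hx hdist
    rw [Real.dist_eq] at h1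
    have := (abs_lt.1 h1).2
    linarith
  choose δ hδpos hδspec using hδ
  set r : ℕ → ℝ := fun n => min ((2⁻¹:ℝ)^n) (δ n) with hrdef
  have hr0 : ∀ n, 0 < r n := fun n => lt_min (by positivity) (hδpos n)
  have hrpow : ∀ n, r n ≤ (2⁻¹:ℝ)^n := fun n => min_le_left _ _
  have hrδ : ∀ n, r n ≤ δ n := fun n => min_le_right _ _
  set c : ℕ → ℝ := fun n => 2 * M * (2⁻¹:ℝ)^n with hcdef
  have hc0 : ∀ n, 0 ≤ c n := fun n => by positivity
  have hcsum : Summable c :=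
    (summable_geometric_of_lt_one (by norm_num) (by norm_num)).mul_left (2 * M)
  set f : ℕ → ℝ → ℝ := fun n x => c n * phi (x / r n) with hfdef
  have hf_nonneg : ∀ n (x : ℝ), 0 ≤ x → 0 ≤ f n x := fun n x hx =>
    mul_nonneg (hc0 n) (phi_nonneg (div_nonneg hx (hr0 n).le))
  have hf_le : ∀ n (x : ℝ), f n x ≤ c n := fun n x => by
    have := phi_le_one (x / r n)
    simpa [hfdef] using mul_le_mul_of_nonneg_left this (hc0 n)
  have hfsum : ∀ x : ℝ, 0 ≤ x → Summable (fun n => f n x) := fun x hx =>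
    Summable.of_nonneg_of_le (fun n => hf_nonneg n x hx) (fun n => hf_le n x) hcsum
  have hphicont : Continuous phi := phi_contDiff.continuous
  have hfcont : ∀ n, Continuous (f n) := fun n =>
    continuous_const.mul (hphicont.comp (continuous_id.div_const (r n)))
  set S : ℝ → ℝ := fun x => ∑' n, f n x with hSdef
  have hS0 : S 0 = 0 := by
    simp only [hSdef, hfdef, zero_div, phi_zero, mul_zero, tsum_zero]
  -- monotonicity of S on [0, ∞)
  have hSmono : ∀ x y : ℝ, 0 ≤ x → x ≤ y → S x ≤ S y := by
    intro x y hx hxy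
    refine Summable.tsum_le_tsum (fun n => ?_) (hfsum x hx) (hfsum y (hx.trans hxy))
    exact mul_le_mul_of_nonneg_left
      (phi_mono ((div_le_div_iff_of_pos_right (hr0 n)).2 hxy)) (hc0 n)
  refine ⟨fun x => u 0 + x + S x, ?_, ?_, ?_, ?_, ?_, ?_⟩
  · -- continuity
    have hScont : ContinuousOn S (Icc 0 1) := by
      refine (tendstoUniformlyOn_tsum hcsum fun n x hx => ?_).continuousOn ?_
      · rw [Real.norm_eq_abs, abs_of_nonneg (hf_nonneg n x hx.1)]
        exact hf_le n x
      · exact Filter.Eventually.frequently (Filter.Eventually.of_forall fun t =>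
          (continuous_finset_sum t fun n _ => hfcont n).continuousOn)
    exact (continuousOn_const.add continuousOn_id).add hScont
  · -- C² on (0,1]
    intro x₀ hx₀
    have hx₀0 : 0 < x₀ := hx₀.1
    obtain ⟨N, hN⟩ : ∃ N : ℕ, (2⁻¹:ℝ)^N < x₀ / 2 :=
      exists_pow_lt_of_lt_one (by positivity) (by norm_num)
    have hmem : Ioi (x₀ / 2) ∈ nhds x₀ := Ioi_mem_nhds (by linarith)
    set CT : ℝ := ∑' n : ℕ, c (n + N) with hCT
    have hEq : ∀ x ∈ Ioi (x₀ / 2),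
        u 0 + x + S x
          = u 0 + x + ((∑ n ∈ Finset.range N, f n x) + CT) := by
      intro x hx
      have hxpos : 0 < x := lt_trans (by linarith) hx
      have hsum := hfsum x hxpos.le
      have hsplit := (hsum.sum_add_tsum_nat_add N).symm
      have htail : ∀ n : ℕ, f (n + N) x = c (n + N) := by
        intro n
        have h1 : r (n + N) ≤ (2⁻¹:ℝ)^N := by
          refine (hrpow (n + N)).trans ?_
          apply pow_le_pow_of_le_one (by norm_num) (by norm_num)
          omega
        have h2 : r (n + N) < x := lt_of_le_of_lt h1 (lt_trans hN hx)
        have h3 : (1:ℝ) ≤ x / r (n + N) := (one_le_div (hr0 _)).2 h2.le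
        simp [hfdef, phi_of_one_le h3]
      have : ∑' n : ℕ, f (n + N) x = CT := by
        rw [hCT]; exact tsum_congr htail
      rw [hSdef]
      simp only
      rw [hsplit, this]
    have hg : ContDiff ℝ 2 fun x : ℝ =>
        u 0 + x + ((∑ n ∈ Finset.range N, f n x) + CT) := by
      refine (contDiff_const.add contDiff_id).add (ContDiff.add ?_ contDiff_const)
      refine ContDiff.sum fun n _ => ?_
      exact contDiff_const.mul (phi_contDiff.comp (contDiff_id.div_const (r n)))
    have : ContDiffAt ℝ 2 (fun x => u 0 + x + S x) x₀ := by
      refine hg.contDiffAt.congr_of_eventuallyEq ?_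
      filter_upwards [hmem] with x hx
      exact hEq x hx
    exact this.contDiffWithinAt
  · -- concavity
    refine ⟨convex_Icc 0 1, ?_⟩
    intro x hx y hy a b ha hb hab
    simp only [smul_eq_mul]
    have hkey : a * S x + b * S y ≤ S (a * x + b * y) := by
      have hxy0 : 0 ≤ a * x + b * y :=
        add_nonneg (mul_nonneg ha hx.1) (mul_nonneg hb hy.1)
      have h1 : a * S x + b * S y = ∑' n, (a * f n x + b * f n y) := by
        rw [hSdef]
        simp only
        rw [Summable.tsum_add ((hfsum x hx.1).mul_left a) ((hfsum y hy.1).mul_left b),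
          ((hfsum x hx.1).tsum_mul_left a), ((hfsum y hy.1).tsum_mul_left b)]
      rw [h1]
      refine Summable.tsum_le_tsum (fun n => ?_)
        (((hfsum x hx.1).mul_left a).add ((hfsum y hy.1).mul_left b))
        (hfsum _ hxy0)
      have harg : (a * x + b * y) / r n = a * (x / r n) + b * (y / r n) := by
        field_simp
      have := phi_concave_ineq (x := x / r n) (y := y / r n) ha hb hab
      rw [hfdef]
      simp only
      rw [harg]
      calc a * (c n * phi (x / r n)) + b * (c n * phi (y / r n))
          = c n * (a * phi (x / r n) + b * phi (y / r n)) := by ring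
        _ ≤ c n * phi (a * (x / r n) + b * (y / r n)) :=
            mul_le_mul_of_nonneg_left this (hc0 n)
    have expand : a * (u 0 + x + S x) + b * (u 0 + y + S y)
        = (a + b) * u 0 + (a * x + b * y) + (a * S x + b * S y) := by ring
    rw [expand, hab, one_mul]
    linarith [hkey]
  · -- strict monotonicity
    intro x hx y hy hxy
    have := hSmono x y hx.1 hxy.le
    simp only
    linarith
  · -- majorization
    intro x hx
    rcases eq_or_lt_of_le hx.1 with h0 | h0
    · rw [← h0]
      show u 0 ≤ u 0 + 0 + S 0
      rw [hS0]; linarith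
    · have hex : ∃ n, r n < x := by
        obtain ⟨n, hn⟩ := exists_pow_lt_of_lt_one h0 (by norm_num : (2⁻¹:ℝ) < 1)
        exact ⟨n, lt_of_le_of_lt (hrpow n) hn⟩
      set k := Nat.find hex with hkdef
      clear_value k
      have hk : r k < x := hkdef ▸ Nat.find_spec hex
      have hk' : ∀ j, j < k → x ≤ r j := fun j hj =>
        le_of_not_gt (Nat.find_min hex (hkdef ▸ hj))
      have hφk : phi (x / r k) = 1 := phi_of_one_le ((one_le_div (hr0 k)).2 hk.le)
      have hfk : f k x = c k := by simp [hfdef, hφk]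
      have hterm : f k x ≤ S x := Summable.le_tsum (hfsum x h0.le) k
        (fun j _ => hf_nonneg j x h0.le)
      have hub : u x - u 0 ≤ c k := by
        rcases Nat.eq_zero_or_pos k with hk0 | hkpos
        · have := hMu x hx
          rw [hk0]
          simp only [hcdef, pow_zero, mul_one]
          linarith
        · obtain ⟨j, rfl⟩ := Nat.exists_eq_succ_of_ne_zero hkpos.ne'
          have hxr : x ≤ r j := hk' j (Nat.lt_succ_self j)
          have hxδ : x ≤ δ j := hxr.trans (hrδ j)
          have := hδspec j x hx hxδ
          have hpow : c (j + 1) = M * (2⁻¹:ℝ)^j := by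
            simp only [hcdef, pow_succ]
            ring
          rw [hpow]
          exact this
      have : u x ≤ u 0 + f k x := by rw [hfk]; linarith
      simp only
      linarith [hterm, this]
  · -- w 0 = u 0
    show u 0 + 0 + S 0 = u 0
    rw [hS0]; ring
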